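/- Let γ > 0 and c ≥ 0, and let V : [0,∞) → ℝ be differentiable with V(t) ≥ 0 and V′(t) ≤ −γ·V(t) + c·√(V(t)) for all t ≥ 0. Then for all t ≥ 0, √(V(t)) ≤ e^{−(γ/2)·t}·√(V(0)) + (c/γ)·(1 − e^{−(γ/2)·t}). -/

import Mathlib

/-- comparison lemma: if `V ≥ 0` is differentiable on `[0, ∞)` with
`V′ ≤ −γ V + c √V` there, then `√V(t) ≤ e^{−γt/2} √V(0) + (c/γ)(1 − e^{−γt/2})`. -/
theorem sqrt_comparison_lemma
    (γ c : ℝ) (hγ : 0 < γ) (hc : 0 ≤ c)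
    (V V' : ℝ → ℝ)
    (hV : ∀ t, 0 ≤ t → HasDerivAt V (V' t) t)
    (hV0 : ∀ t, 0 ≤ t → 0 ≤ V t)
    (hV' : ∀ t, 0 ≤ t → V' t ≤ -γ * V t + c * Real.sqrt (V t)) :
    ∀ t, 0 ≤ t →
      Real.sqrt (V t) ≤
        Real.exp (-(γ / 2) * t) * Real.sqrt (V 0)
          + (c / γ) * (1 - Real.exp (-(γ / 2) * t)) := by
  intro t ht
  set g : ℝ → ℝ := fun s =>
    Real.exp (-(γ / 2) * s) * Real.sqrt (V 0) + (c / γ) * (1 - Real.exp (-(γ / 2) * s))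
    with hg_def
  set gd : ℝ → ℝ := fun s =>
    Real.exp (-(γ / 2) * s) * (-(γ / 2)) * Real.sqrt (V 0)
      + (c / γ) * (γ / 2 * Real.exp (-(γ / 2) * s)) with hgd_def
  have hexp : ∀ s : ℝ, HasDerivAt (fun u => Real.exp (-(γ / 2) * u))
      (Real.exp (-(γ / 2) * s) * (-(γ / 2))) s := by
    intro s
    have h1 : HasDerivAt (fun u : ℝ => -(γ / 2) * u) (-(γ / 2)) s := by
      simpa using (hasDerivAt_id s).const_mul (-(γ / 2))
    exact h1.exp
  have hg : ∀ s, HasDerivAt g (gd s) s := by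
    intro s
    have h1 := (hexp s).mul_const (Real.sqrt (V 0))
    have h2 : HasDerivAt (fun u => (c / γ) * (1 - Real.exp (-(γ / 2) * u)))
        ((c / γ) * (γ / 2 * Real.exp (-(γ / 2) * s))) s := by
      have := ((hasDerivAt_const s (1 : ℝ)).sub (hexp s)).const_mul (c / γ)
      convert this using 1
      all_goals (try rfl)
      ring
    exact h1.add h2
  have hgnn : ∀ s, 0 ≤ s → 0 ≤ g s := by
    intro s hs
    have hE : 0 < Real.exp (-(γ / 2) * s) := Real.exp_pos _
    have hE1 : Real.exp (-(γ / 2) * s) ≤ 1 := by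
      apply Real.exp_le_one_iff.mpr
      nlinarith
    have h1 : 0 ≤ Real.sqrt (V 0) := Real.sqrt_nonneg _
    have h2 : 0 ≤ c / γ := div_nonneg hc hγ.le
    have : 0 ≤ Real.exp (-(γ / 2) * s) * Real.sqrt (V 0) := by positivity
    have : 0 ≤ (c / γ) * (1 - Real.exp (-(γ / 2) * s)) := by nlinarith
    simp only [hg_def]
    nlinarith
  have key : ∀ ε : ℝ, 0 < ε → Real.sqrt (V t) ≤ g t + ε := by
    intro ε hε
    set B : ℝ → ℝ := fun s => (g s + ε) ^ 2 with hB_def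
    set Bd : ℝ → ℝ := fun s => 2 * (g s + ε) * gd s with hBd_def
    have hB : ∀ s, HasDerivAt B (Bd s) s := by
      intro s
      have := ((hg s).add_const ε).pow 2
      convert this using 1
      all_goals (try rfl)
      simp only [hBd_def]
      ring
    have hfc : ContinuousOn V (Set.Icc 0 t) := by
      intro x hx
      exact (hV x hx.1).continuousAt.continuousWithinAt
    have hfd : ∀ x ∈ Set.Ico 0 t, HasDerivWithinAt V (V' x) (Set.Ici x) x := by
      intro x hx
      exact (hV x hx.1).hasDerivWithinAt
    have ha : V 0 ≤ B 0 := by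
      have h0 : g 0 = Real.sqrt (V 0) := by simp [hg_def]
      have hsq : Real.sqrt (V 0) ^ 2 = V 0 := Real.sq_sqrt (hV0 0 le_rfl)
      simp only [hB_def, h0]
      nlinarith [Real.sqrt_nonneg (V 0)]
    have bound : ∀ x ∈ Set.Ico 0 t, V x = B x → V' x < Bd x := by
      intro x hx hVB
      have hx0 : 0 ≤ x := hx.1
      have hgx : 0 ≤ g x := hgnn x hx0
      have hgε : 0 < g x + ε := by linarith
      have hsqrtB : Real.sqrt (B x) = g x + ε := by
        rw [hB_def]
        exact Real.sqrt_sq hgε.le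
      have h1 : V' x ≤ -γ * V x + c * Real.sqrt (V x) := hV' x hx0
      rw [hVB, hsqrtB] at h1
      -- key algebra: -γ*(g+ε)^2 + c*(g+ε) = 2*(g+ε)*gd x - γ*ε*(g+ε) - ... 
      have hkey : -γ * B x + c * (g x + ε) < Bd x := by
        have hcγ : c / γ * γ = c := div_mul_cancel₀ c hγ.ne'
        have h2gd : 2 * gd x = -γ * g x + c := by
          simp only [hgd_def, hg_def]
          have hE := Real.exp_pos (-(γ / 2) * x)
          field_simp
          ring
        have : Bd x = (g x + ε) * (2 * gd x) := by simp [hBd_def]; ring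
        have hBx : B x = (g x + ε) ^ 2 := rfl
        rw [this, h2gd, hBx]
        nlinarith [mul_pos hγ (mul_pos hgε hε)]
      calc V' x ≤ -γ * B x + c * (g x + ε) := h1
        _ < Bd x := hkey
    have hmain := image_le_of_deriv_right_lt_deriv_boundary hfc hfd ha hB bound
      (Set.right_mem_Icc.mpr ht)
    -- now V t ≤ (g t + ε)^2
    have := Real.sqrt_le_sqrt hmain
    rwa [Real.sqrt_sq (by linarith [hgnn t ht] : (0:ℝ) ≤ g t + ε)] at this
  have := le_of_forall_pos_le_add key
  simpa [hg_def] using this
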